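/- arXiv:math/0509321 — 2 statements merged into one kernel-verified Lean document; each statement's English description precedes it below -/
import Mathlib

section
/- Let 1 ≤ p < ∞ and f ∈ Lᵖ(ℝᵈ). Define the p-Grammian f_{b,p}(ω) = (|det b| ∑_{s ∈ ℤᵈ} |f(b(ω+s))|^p)^{1/p} for b ∈ GL_d(ℝ). Then f_{b,p} converges to the constant function ‖f‖_p in Lᵖ([0,1]ᵈ) as ‖b‖ → 0. -/
open MeasureTheory Filter
noncomputable section

/-- The p-Grammian of `f` with respect to the matrix `b`. -/
def pgram {d : ℕ} (p : ℝ) (b : Matrix (Fin d) (Fin d) ℝ) (f : (Fin d → ℝ) → ℂ)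
    (ω : Fin d → ℝ) : ℝ :=
  (|b.det| * ∑' s : Fin d → ℤ, ‖f (b.mulVec (ω + fun i => (s i : ℝ)))‖ ^ p) ^ (1 / p)

/-- The filter of invertible matrices whose operator norm tends to `0`. -/
def smallGL (d : ℕ) : Filter (Matrix (Fin d) (Fin d) ℝ) :=
  (Filter.comap (fun b : Matrix (Fin d) (Fin d) ℝ =>
      ‖LinearMap.toContinuousLinearMap (Matrix.toLin' b)‖) (nhds 0)) ⊓
    Filter.principal {b | IsUnit b}

open scoped ENNReal NNReal

namespace PgramAux


variable {d : ℕ}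

/-- The half-open unit cube. -/
def Qd (d : ℕ) : Set (Fin d → ℝ) := Set.univ.pi fun _ => Set.Ico 0 1

def sv (s : Fin d → ℤ) : Fin d → ℝ := fun i => (s i : ℝ)

lemma measQd : MeasurableSet (Qd d) :=
  MeasurableSet.univ_pi fun _ => measurableSet_Ico

lemma volQd : (volume : Measure (Fin d → ℝ)) (Qd d) = 1 := by
  rw [Qd, volume_pi_pi]; simp

lemma Qd_subset_Icc : Qd d ⊆ Set.Icc (0 : Fin d → ℝ) 1 := by
  intro x hx
  rw [← Set.pi_univ_Icc]
  intro i _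
  have := hx i (Set.mem_univ i)
  exact ⟨this.1, this.2.le⟩

lemma restrict_Icc_eq :
    (volume : Measure (Fin d → ℝ)).restrict (Set.Icc (0 : Fin d → ℝ) 1)
      = volume.restrict (Qd d) := by
  apply Measure.restrict_congr_set
  have hsub : Qd d ⊆ Set.Icc (0 : Fin d → ℝ) 1 := Qd_subset_Icc
  have hIcc : MeasurableSet (Set.Icc (0 : Fin d → ℝ) 1) := measurableSet_Icc
  have hvol : (volume : Measure (Fin d → ℝ)) (Set.Icc (0 : Fin d → ℝ) 1) = 1 := by
    rw [← Set.pi_univ_Icc, volume_pi_pi]; simp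
  have hdiff : (volume : Measure (Fin d → ℝ)) (Set.Icc (0 : Fin d → ℝ) 1 \ Qd d) = 0 := by
    rw [measure_diff hsub measQd.nullMeasurableSet (by rw [volQd]; exact ENNReal.one_ne_top),
      hvol, volQd, tsub_self]
  rw [MeasureTheory.ae_eq_set]
  exact ⟨hdiff, by rw [Set.diff_eq_empty.mpr hsub]; simp⟩



def tile (s : Fin d → ℤ) : Set (Fin d → ℝ) := (fun x => x - sv s) ⁻¹' Qd d

lemma mem_tile {s : Fin d → ℤ} {x : Fin d → ℝ} : x ∈ tile s ↔ ∀ i, ⌊x i⌋ = s i := by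
  simp only [tile, Set.mem_preimage, Qd, Set.mem_pi, Set.mem_univ, forall_true_left,
    Set.mem_Ico, Pi.sub_apply, sv]
  refine forall_congr' fun i => ?_
  rw [Int.floor_eq_iff]
  constructor
  · rintro ⟨h1, h2⟩; exact ⟨by linarith, by linarith⟩
  · rintro ⟨h1, h2⟩; exact ⟨by linarith, by linarith⟩

lemma measTile (s : Fin d → ℤ) : MeasurableSet (tile s) :=
  (MeasurableSet.univ_pi fun _ => measurableSet_Ico).preimage (measurable_id.sub measurable_const)

lemma disjTile : Pairwise (Function.onFun Disjoint (tile (d := d))) := by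
  intro s t hst
  rw [Function.onFun, Set.disjoint_left]
  intro x hx hx'
  exact hst (funext fun i => ((mem_tile.mp hx) i).symm.trans ((mem_tile.mp hx') i))

lemma unionTile : (⋃ s : Fin d → ℤ, tile s) = Set.univ := by
  ext x
  simp only [Set.mem_iUnion, Set.mem_univ, iff_true]
  exact ⟨fun i => ⌊x i⌋, mem_tile.mpr fun i => rfl⟩

/-- Periodization identity for the unit cube tiling. -/
lemma per (ψ : (Fin d → ℝ) → ℝ≥0∞) (hψ : Measurable ψ) :
    ∑' s : Fin d → ℤ, ∫⁻ ω in Qd d, ψ (ω + sv s) = ∫⁻ x, ψ x := by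
  have h1 : ∀ s : Fin d → ℤ, ∫⁻ ω in Qd d, ψ (ω + sv s) = ∫⁻ x in tile s, ψ x := by
    intro s
    have hT : MeasurePreserving (fun ω : Fin d → ℝ => ω + sv s) volume volume :=
      measurePreserving_add_right volume (sv s)
    have hTe : MeasurableEmbedding (fun ω : Fin d → ℝ => ω + sv s) :=
      (MeasurableEquiv.addRight (sv s)).measurableEmbedding
    have hpre : (fun ω : Fin d → ℝ => ω + sv s) ⁻¹' (tile s) = Qd d := by
      ext ω; simp [tile, Set.preimage_preimage]
    rw [← hpre]
    exact hT.setLIntegral_comp_preimage_emb hTe ψ (tile s)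
  simp_rw [h1]
  rw [← lintegral_iUnion measTile disjTile, unionTile, Measure.restrict_univ]


lemma det_ne_zero {b : Matrix (Fin d) (Fin d) ℝ} (hb : IsUnit b) : b.det ≠ 0 := by
  have := (Matrix.isUnit_iff_isUnit_det b).mp hb
  exact isUnit_iff_ne_zero.mp this

lemma cont_affine (b : Matrix (Fin d) (Fin d) ℝ) (v : Fin d → ℝ) :
    Continuous (fun x : Fin d → ℝ => b.mulVec (x + v)) := by
  have h1 : Continuous (Matrix.toLin' b) := LinearMap.continuous_of_finiteDimensional _
  have : (fun x : Fin d → ℝ => b.mulVec (x + v)) = (Matrix.toLin' b) ∘ (fun x => x + v) := by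
    funext x; simp [Matrix.toLin'_apply]
  rw [this]
  exact h1.comp (continuous_id.add continuous_const)

lemma mapeq {b : Matrix (Fin d) (Fin d) ℝ} (hb : IsUnit b) (v : Fin d → ℝ) :
    Measure.map (fun x : Fin d → ℝ => b.mulVec (x + v)) volume
      = (ENNReal.ofReal |b.det|)⁻¹ • volume := by
  have hdet := det_ne_zero hb
  have hcomp : (fun x : Fin d → ℝ => b.mulVec (x + v)) = (Matrix.toLin' b) ∘ (fun x => x + v) := by
    funext x; simp [Matrix.toLin'_apply]
  have h2 : Measurable fun x : Fin d → ℝ => x + v := measurable_id.add_const v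
  have h1 : Measurable (Matrix.toLin' b) :=
    (LinearMap.continuous_of_finiteDimensional _).measurable
  rw [hcomp, ← Measure.map_map h1 h2]
  rw [map_add_right_eq_self volume v, Real.map_matrix_volume_pi_eq_smul_volume_pi hdet]
  congr 1
  rw [abs_inv, ENNReal.ofReal_inv_of_pos (abs_pos.mpr hdet)]

lemma cv {b : Matrix (Fin d) (Fin d) ℝ} (hb : IsUnit b) (v : Fin d → ℝ)
    (φ : (Fin d → ℝ) → ℝ≥0∞) (hφ : Measurable φ) :
    ∫⁻ x, φ (b.mulVec (x + v)) = (ENNReal.ofReal |b.det|)⁻¹ * ∫⁻ x, φ x := by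
  rw [← lintegral_map hφ (cont_affine b v).measurable, mapeq hb v, lintegral_smul_measure, smul_eq_mul]

lemma nullpre {b : Matrix (Fin d) (Fin d) ℝ} (hb : IsUnit b) (v : Fin d → ℝ)
    {N : Set (Fin d → ℝ)} (hN : volume N = 0) :
    volume ((fun x : Fin d → ℝ => b.mulVec (x + v)) ⁻¹' N) = 0 := by
  obtain ⟨N', hNN', hN'meas, hN'0⟩ := exists_measurable_superset_of_null hN
  refine measure_mono_null (Set.preimage_mono hNN') ?_
  rw [← Measure.map_apply (cont_affine b v).measurable hN'meas, mapeq hb v]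
  simp [hN'0]



/-- ℝ≥0∞ distance-like function. -/
def D (a c : ℝ≥0∞) : ℝ≥0∞ := (a - c) + (c - a)

lemma D_comm (a c : ℝ≥0∞) : D a c = D c a := by rw [D, D, add_comm]

lemma D_triangle (a b c : ℝ≥0∞) : D a c ≤ D a b + D b c := by
  rw [D, D, D]
  calc a - c + (c - a) ≤ (a - b + (b - c)) + (c - b + (b - a)) :=
        add_le_add (tsub_le_tsub_add_tsub) (tsub_le_tsub_add_tsub)
    _ = a - b + (b - a) + (b - c + (c - b)) := by ring
  
lemma D_mul {k : ℝ≥0∞} (hk : k ≠ ⊤) (a c : ℝ≥0∞) : D (k * a) (k * c) = k * D a c := by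
  rw [D, D, mul_add, ENNReal.mul_sub (fun _ _ => hk), ENNReal.mul_sub (fun _ _ => hk)]

lemma tsum_sub_le {ι : Type*} (f g : ι → ℝ≥0∞) : (∑' i, f i) - (∑' i, g i) ≤ ∑' i, (f i - g i) := by
  rw [tsub_le_iff_right, ← ENNReal.tsum_add]
  exact ENNReal.tsum_le_tsum fun i => by
    rw [add_comm]; exact le_add_tsub

lemma D_tsum {ι : Type*} (f g : ι → ℝ≥0∞) : D (∑' i, f i) (∑' i, g i) ≤ ∑' i, D (f i) (g i) := by
  rw [D]
  calc (∑' i, f i) - (∑' i, g i) + ((∑' i, g i) - (∑' i, f i))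
      ≤ (∑' i, (f i - g i)) + (∑' i, (g i - f i)) := add_le_add (tsum_sub_le f g) (tsum_sub_le g f)
    _ = ∑' i, D (f i) (g i) := (ENNReal.tsum_add).symm

lemma D_le_add (a c : ℝ≥0∞) : D a c ≤ a + c := add_le_add tsub_le_self tsub_le_self

lemma D_lintegral_le {α : Type*} [MeasurableSpace α] (μ : Measure α) {F G : α → ℝ≥0∞}
    (hF : Measurable F) (hG : Measurable G) :
    D (∫⁻ x, F x ∂μ) (∫⁻ x, G x ∂μ) ≤ ∫⁻ x, D (F x) (G x) ∂μ := by
  have key : ∀ (u v : α → ℝ≥0∞), Measurable v →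
      (∫⁻ x, u x ∂μ) - (∫⁻ x, v x ∂μ) ≤ ∫⁻ x, (u x - v x) ∂μ := by
    intro u v hv
    rw [tsub_le_iff_right, ← lintegral_add_right _ hv]
    exact lintegral_mono fun x => by rw [add_comm]; exact le_add_tsub
  rw [D]
  calc (∫⁻ x, F x ∂μ) - (∫⁻ x, G x ∂μ) + ((∫⁻ x, G x ∂μ) - (∫⁻ x, F x ∂μ))
      ≤ (∫⁻ x, (F x - G x) ∂μ) + (∫⁻ x, (G x - F x) ∂μ) :=
        add_le_add (key F G hG) (key G F hF)
    _ = ∫⁻ x, D (F x) (G x) ∂μ := (lintegral_add_left (hF.sub hG) _).symm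

lemma D_ofReal (a c : ℝ) : D (ENNReal.ofReal a) (ENNReal.ofReal c) ≤ ENNReal.ofReal |a - c| := by
  have key : ∀ a c : ℝ, c ≤ a → ENNReal.ofReal a - ENNReal.ofReal c ≤ ENNReal.ofReal |a - c| := by
    intro a c h
    rcases le_or_gt 0 c with hc | hc
    · rw [abs_of_nonneg (by linarith), ← ENNReal.ofReal_sub a hc]
    · rw [ENNReal.ofReal_of_nonpos hc.le, tsub_zero]
      exact ENNReal.ofReal_le_ofReal (le_trans (by linarith) (le_abs_self _))
  rcases le_total c a with h | h
  · rw [D, tsub_eq_zero_of_le (ENNReal.ofReal_le_ofReal h), add_zero]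
    exact key a c h
  · rw [D, tsub_eq_zero_of_le (ENNReal.ofReal_le_ofReal h), zero_add, abs_sub_comm]
    exact key c a h

lemma D_toReal {x y : ℝ≥0∞} (hx : x ≠ ⊤) (hy : y ≠ ⊤) :
    ENNReal.ofReal |x.toReal - y.toReal| ≤ D x y := by
  have key : ∀ x y : ℝ≥0∞, y ≤ x → x ≠ ⊤ → ENNReal.ofReal (x.toReal - y.toReal) ≤ D x y := by
    intro x y h hx
    have hxy : x - y ≠ ⊤ := ne_top_of_le_ne_top hx tsub_le_self
    rw [← ENNReal.toReal_sub_of_le h hx, ENNReal.ofReal_toReal hxy]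
    exact le_self_add
  rcases le_total y x with h | h
  · rw [abs_of_nonneg (sub_nonneg.mpr (ENNReal.toReal_mono hx h))]
    exact key x y h hx
  · rw [abs_of_nonpos (sub_nonpos.mpr (ENNReal.toReal_mono hy h)), neg_sub, D_comm]
    exact key y x h hy

/-- The key real inequality. -/
lemma abs_rpow_inv_sub_le {a c p : ℝ} (hp : 1 ≤ p) (ha : 0 ≤ a) (hc : 0 ≤ c) :
    |a ^ (1/p) - c ^ (1/p)| ≤ |a - c| ^ (1/p) := by
  have hp0 : 0 < p := lt_of_lt_of_le one_pos hp
  have key : ∀ a c : ℝ, 0 ≤ a → 0 ≤ c → c ≤ a → a ^ (1/p) - c ^ (1/p) ≤ (a - c) ^ (1/p) := by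
    intro a c ha hc h
    have hBound : a ^ (1/p) ≤ (a - c) ^ (1/p) + c ^ (1/p) := by
      have hn := NNReal.rpow_add_rpow_le_add ((a - c).toNNReal ^ (1/p)) (c.toNNReal ^ (1/p)) hp
      have e1 : ((a - c).toNNReal ^ (1/p)) ^ p = (a - c).toNNReal := by
        rw [← NNReal.rpow_mul, one_div, inv_mul_cancel₀ hp0.ne', NNReal.rpow_one]
      have e2 : ((c).toNNReal ^ (1/p)) ^ p = (c).toNNReal := by
        rw [← NNReal.rpow_mul, one_div, inv_mul_cancel₀ hp0.ne', NNReal.rpow_one]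
      have e3 : (a - c).toNNReal + c.toNNReal = a.toNNReal := by
        rw [← Real.toNNReal_add (by linarith) hc, sub_add_cancel]
      rw [e1, e2, e3] at hn
      calc a ^ (1/p) = ((a.toNNReal ^ (1/p) : ℝ≥0) : ℝ) := by
            rw [NNReal.coe_rpow, Real.coe_toNNReal _ ha]
        _ ≤ (((a - c).toNNReal ^ (1/p) + c.toNNReal ^ (1/p) : ℝ≥0) : ℝ) := NNReal.coe_le_coe.mpr hn
        _ = (a - c) ^ (1/p) + c ^ (1/p) := by
            rw [NNReal.coe_add, NNReal.coe_rpow, NNReal.coe_rpow,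
              Real.coe_toNNReal _ (sub_nonneg.mpr h), Real.coe_toNNReal _ hc]
    linarith [hBound]
  rcases le_total c a with h | h
  · rw [abs_of_nonneg (sub_nonneg.mpr (Real.rpow_le_rpow hc h (by positivity))),
      abs_of_nonneg (sub_nonneg.mpr h)]
    exact key a c ha hc h
  · rw [abs_of_nonpos (sub_nonpos.mpr (Real.rpow_le_rpow ha h (by positivity))), neg_sub,
      abs_of_nonpos (sub_nonpos.mpr h), neg_sub]
    exact key c a hc ha h


/-- Master periodization + change-of-variables identity. -/
lemma master {b : Matrix (Fin d) (Fin d) ℝ} (hb : IsUnit b)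
    (φ : (Fin d → ℝ) → ℝ≥0∞) (hφ : Measurable φ) :
    ∫⁻ ω in Qd d, ∑' s : Fin d → ℤ, φ (b.mulVec (ω + sv s))
      = (ENNReal.ofReal |b.det|)⁻¹ * ∫⁻ x, φ x := by
  have hmeas : ∀ s : Fin d → ℤ, Measurable fun ω : Fin d → ℝ => φ (b.mulVec (ω + sv s)) :=
    fun s => hφ.comp (cont_affine b (sv s)).measurable
  rw [lintegral_tsum (fun s => (hmeas s).aemeasurable)]
  have h1 : ∀ s : Fin d → ℤ, ∫⁻ ω in Qd d, φ (b.mulVec (ω + sv s))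
      = ∫⁻ ω in Qd d, (fun x => φ (b.mulVec x)) (ω + sv s) := fun s => rfl
  simp_rw [h1]
  rw [per (fun x => φ (b.mulVec x)) (hφ.comp (by simpa using (cont_affine b 0).measurable))]
  have h2 := cv hb 0 φ hφ
  simpa using h2

lemma eventually_smallGL {r : ℝ} (hr : 0 < r) :
    ∀ᶠ b in smallGL d, IsUnit b ∧
      ‖LinearMap.toContinuousLinearMap (Matrix.toLin' b)‖ < r := by
  rw [smallGL, eventually_inf_principal]
  have hmem : (fun b : Matrix (Fin d) (Fin d) ℝ =>
      ‖LinearMap.toContinuousLinearMap (Matrix.toLin' b)‖) ⁻¹' Metric.ball 0 r ∈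
      Filter.comap (fun b : Matrix (Fin d) (Fin d) ℝ =>
      ‖LinearMap.toContinuousLinearMap (Matrix.toLin' b)‖) (nhds 0) :=
    Filter.preimage_mem_comap (Metric.ball_mem_nhds 0 hr)
  filter_upwards [hmem] with b hball hunit
  refine ⟨hunit, ?_⟩
  have := Metric.mem_ball.mp hball
  rw [Real.dist_0_eq_abs, abs_of_nonneg (norm_nonneg _)] at this
  exact this

lemma dist_mulVec_le (b : Matrix (Fin d) (Fin d) ℝ) (x y : Fin d → ℝ) :
    dist (b.mulVec x) (b.mulVec y)
      ≤ ‖LinearMap.toContinuousLinearMap (Matrix.toLin' b)‖ * ‖x - y‖ := by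
  have hL : ∀ z, LinearMap.toContinuousLinearMap (Matrix.toLin' b) z = b.mulVec z := fun z => by
    rw [LinearMap.coe_toContinuousLinearMap', Matrix.toLin'_apply]
  rw [dist_eq_norm, ← hL x, ← hL y, ← map_sub]
  exact (LinearMap.toContinuousLinearMap (Matrix.toLin' b)).le_opNorm _

lemma norm_sub_le_one {ω u : Fin d → ℝ} (hω : ω ∈ Set.Icc (0 : Fin d → ℝ) 1)
    (hu : u ∈ Set.Icc (0 : Fin d → ℝ) 1) : ‖ω - u‖ ≤ 1 := by
  rw [pi_norm_le_iff_of_nonneg (by norm_num)]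
  intro i
  have h1 := hω.1 i; have h2 := hω.2 i; have h3 := hu.1 i; have h4 := hu.2 i
  simp only [Pi.zero_apply, Pi.one_apply] at h1 h2 h3 h4
  rw [Pi.sub_apply, Real.norm_eq_abs, abs_le]
  constructor <;> linarith

theorem core (φr : (Fin d → ℝ) → ℝ) (hmeas : Measurable φr) (hint : Integrable φr) :
    Tendsto (fun b : Matrix (Fin d) (Fin d) ℝ =>
        ∫⁻ ω in Qd d, D (ENNReal.ofReal |b.det| *
          ∑' s : Fin d → ℤ, ENNReal.ofReal (φr (b.mulVec (ω + sv s))))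
          (∫⁻ x, ENNReal.ofReal (φr x)))
      (smallGL d) (nhds 0) := by
  rw [ENNReal.tendsto_nhds_zero]
  intro ε hε
  set ε3 : ℝ≥0∞ := min ε 1 / 3 with hε3def
  have hmin : (0 : ℝ≥0∞) < min ε 1 := lt_min hε one_pos
  have hε3 : ε3 ≠ 0 := (ENNReal.div_pos hmin.ne' (by norm_num)).ne'
  have hε3top : ε3 ≠ ⊤ := by
    refine ne_top_of_le_ne_top (@ENNReal.one_ne_top) ?_
    calc ε3 ≤ 1 / 3 := by exact ENNReal.div_le_div_right (min_le_right _ _) 3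
      _ ≤ 1 := by norm_num
  -- approximation by a continuous compactly supported function
  have hmem1 : MemLp φr 1 volume := (memLp_one_iff_integrable).mpr hint
  obtain ⟨g₀, hg₀supp, hg₀close, hg₀cont, _⟩ :=
    hmem1.exists_hasCompactSupport_eLpNorm_sub_le ENNReal.one_ne_top hε3
  set φ : (Fin d → ℝ) → ℝ≥0∞ := fun x => ENNReal.ofReal (φr x) with hφdef
  set h : (Fin d → ℝ) → ℝ≥0∞ := fun x => ENNReal.ofReal (g₀ x) with hhdef
  have hφm : Measurable φ := hmeas.ennreal_ofReal
  have hhm : Measurable h := hg₀cont.measurable.ennreal_ofReal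
  set Dfh : (Fin d → ℝ) → ℝ≥0∞ := fun x => D (φ x) (h x) with hDfhdef
  have hDm : Measurable Dfh := (hφm.sub hhm).add (hhm.sub hφm)
  have key1 : ∫⁻ x, Dfh x ≤ ε3 := by
    calc ∫⁻ x, Dfh x ≤ ∫⁻ x, (‖(φr - g₀) x‖₊ : ℝ≥0∞) := by
          refine lintegral_mono fun x => ?_
          rw [Pi.sub_apply, ← enorm_eq_nnnorm, Real.enorm_eq_ofReal_abs]
          exact D_ofReal (φr x) (g₀ x)
      _ = eLpNorm (φr - g₀) 1 volume := by simp only [eLpNorm_one_eq_lintegral_enorm, enorm_eq_nnnorm]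
      _ ≤ ε3 := hg₀close
  -- geometric data
  set K' : Set (Fin d → ℝ) := Metric.cthickening 1 (tsupport g₀) with hK'def
  have hK'meas : MeasurableSet K' := Metric.isClosed_cthickening.measurableSet
  have hK'comp : IsCompact K' := hg₀supp.cthickening
  have hVfin : volume K' < ⊤ := hK'comp.measure_lt_top
  set ρ : ℝ := ε3.toReal / ((volume K').toReal + 1) with hρdef
  have hρ : 0 < ρ := div_pos (ENNReal.toReal_pos hε3 hε3top) (by positivity)
  have hρV : ENNReal.ofReal ρ * volume K' ≤ ε3 := by
    calc ENNReal.ofReal ρ * volume K'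
        = ENNReal.ofReal ρ * ENNReal.ofReal (volume K').toReal := by
          rw [ENNReal.ofReal_toReal hVfin.ne]
      _ = ENNReal.ofReal (ρ * (volume K').toReal) := (ENNReal.ofReal_mul hρ.le).symm
      _ ≤ ENNReal.ofReal ε3.toReal := by
          refine ENNReal.ofReal_le_ofReal ?_
          rw [hρdef, div_mul_eq_mul_div, div_le_iff₀ (by positivity)]
          nlinarith [ENNReal.toReal_nonneg (a := volume K'), ENNReal.toReal_nonneg (a := ε3)]
      _ = ε3 := ENNReal.ofReal_toReal hε3top
  -- uniform continuity
  have hUC := hg₀supp.uniformContinuous_of_continuous hg₀cont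
  obtain ⟨δ₀, hδ₀, hδ₀p⟩ := Metric.uniformContinuous_iff.mp hUC ρ hρ
  set r : ℝ := min δ₀ 1 with hrdef
  have hr : 0 < r := lt_min hδ₀ one_pos
  filter_upwards [eventually_smallGL hr] with b hb
  obtain ⟨hbU, hbn⟩ := hb
  have hdet := det_ne_zero hbU
  set c₀ : ℝ≥0∞ := ENNReal.ofReal |b.det| with hc₀def
  have hc₀0 : c₀ ≠ 0 := by
    rw [hc₀def, Ne, ENNReal.ofReal_eq_zero, not_le]
    exact abs_pos.mpr hdet
  have hc₀top : c₀ ≠ ⊤ := ENNReal.ofReal_ne_top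
  have hM2 := master hbU h hhm
  have hM3 := master hbU Dfh hDm
  have hMind := master hbU (K'.indicator 1) (measurable_one.indicator hK'meas)
  have hmeas_s : ∀ (F : (Fin d → ℝ) → ℝ≥0∞), Measurable F → ∀ s : Fin d → ℤ,
      Measurable fun ω : Fin d → ℝ => F (b.mulVec (ω + sv s)) :=
    fun F hF s => hF.comp (cont_affine b (sv s)).measurable
  -- Term A
  have termA : ∫⁻ ω in Qd d, D (c₀ * ∑' s : Fin d → ℤ, φ (b.mulVec (ω + sv s)))
      (c₀ * ∑' s : Fin d → ℤ, h (b.mulVec (ω + sv s))) ≤ ε3 := by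
    calc ∫⁻ ω in Qd d, D (c₀ * ∑' s : Fin d → ℤ, φ (b.mulVec (ω + sv s)))
          (c₀ * ∑' s : Fin d → ℤ, h (b.mulVec (ω + sv s)))
        ≤ ∫⁻ ω in Qd d, c₀ * ∑' s : Fin d → ℤ, Dfh (b.mulVec (ω + sv s)) := by
          refine lintegral_mono fun ω => ?_
          rw [D_mul hc₀top]
          exact mul_le_mul_right (D_tsum _ _) c₀
      _ = c₀ * ∫⁻ ω in Qd d, ∑' s : Fin d → ℤ, Dfh (b.mulVec (ω + sv s)) :=
          lintegral_const_mul c₀ (Measurable.ennreal_tsum fun s => hmeas_s Dfh hDm s)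
      _ = c₀ * ((ENNReal.ofReal |b.det|)⁻¹ * ∫⁻ x, Dfh x) := by rw [hM3]
      _ = ∫⁻ x, Dfh x := by
          rw [← hc₀def, ← mul_assoc, ENNReal.mul_inv_cancel hc₀0 hc₀top, one_mul]
      _ ≤ ε3 := key1
  -- Term C
  have termC : D (∫⁻ x, h x) (∫⁻ x, φ x) ≤ ε3 := by
    calc D (∫⁻ x, h x) (∫⁻ x, φ x) ≤ ∫⁻ x, D (h x) (φ x) := D_lintegral_le volume hhm hφm
      _ = ∫⁻ x, Dfh x := lintegral_congr fun x => D_comm _ _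
      _ ≤ ε3 := key1
  -- Term B
  have hI₀ : ∑' s : Fin d → ℤ, ∫⁻ u in Qd d, h (b.mulVec (u + sv s))
      = (ENNReal.ofReal |b.det|)⁻¹ * ∫⁻ x, h x := by
    rw [← lintegral_tsum (fun s => (hmeas_s h hhm s).aemeasurable)]
    exact hM2
  have hLnn : (0:ℝ) ≤ ‖LinearMap.toContinuousLinearMap (Matrix.toLin' b)‖ := norm_nonneg _
  have termBpt : ∀ ω ∈ Qd d, D (c₀ * ∑' s : Fin d → ℤ, h (b.mulVec (ω + sv s))) (∫⁻ x, h x)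
      ≤ ENNReal.ofReal ρ * (c₀ * ∑' s : Fin d → ℤ, K'.indicator 1 (b.mulVec (ω + sv s))) := by
    intro ω hω
    have hIrw : ∫⁻ x, h x = c₀ * ∑' s : Fin d → ℤ, ∫⁻ u in Qd d, h (b.mulVec (u + sv s)) := by
      rw [hI₀, ← hc₀def, ← mul_assoc, ENNReal.mul_inv_cancel hc₀0 hc₀top, one_mul]
    rw [hIrw, D_mul hc₀top]
    calc c₀ * D (∑' s : Fin d → ℤ, h (b.mulVec (ω + sv s)))
          (∑' s : Fin d → ℤ, ∫⁻ u in Qd d, h (b.mulVec (u + sv s)))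
        ≤ c₀ * ∑' s : Fin d → ℤ, D (h (b.mulVec (ω + sv s)))
            (∫⁻ u in Qd d, h (b.mulVec (u + sv s))) := mul_le_mul_right (D_tsum _ _) c₀
      _ ≤ c₀ * ∑' s : Fin d → ℤ,
            ENNReal.ofReal ρ * K'.indicator 1 (b.mulVec (ω + sv s)) := by
          refine mul_le_mul_right (ENNReal.tsum_le_tsum fun s => ?_) c₀
          have hconst : h (b.mulVec (ω + sv s))
              = ∫⁻ _ in Qd d, h (b.mulVec (ω + sv s)) ∂volume := by
            rw [setLIntegral_const, volQd, mul_one]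
          rw [hconst]
          refine le_trans (D_lintegral_le (volume.restrict (Qd d)) measurable_const
            (hmeas_s h hhm s)) ?_
          have hbound : ∀ u ∈ Qd d, D (h (b.mulVec (ω + sv s))) (h (b.mulVec (u + sv s)))
              ≤ ENNReal.ofReal ρ * K'.indicator 1 (b.mulVec (ω + sv s)) := by
            intro u hu
            have hdist : dist (b.mulVec (ω + sv s)) (b.mulVec (u + sv s)) < r := by
              have h1 := dist_mulVec_le b (ω + sv s) (u + sv s)
              have h2 : (ω + sv s) - (u + sv s) = ω - u := by
                funext i; simp
              rw [h2] at h1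
              have h3 : ‖ω - u‖ ≤ 1 := norm_sub_le_one (Qd_subset_Icc hω) (Qd_subset_Icc hu)
              calc dist (b.mulVec (ω + sv s)) (b.mulVec (u + sv s))
                  ≤ ‖LinearMap.toContinuousLinearMap (Matrix.toLin' b)‖ * ‖ω - u‖ := h1
                _ ≤ ‖LinearMap.toContinuousLinearMap (Matrix.toLin' b)‖ * 1 :=
                    mul_le_mul_of_nonneg_left h3 hLnn
                _ < r := by rw [mul_one]; exact hbn
            by_cases hy : b.mulVec (ω + sv s) ∈ K'
            · rw [Set.indicator_of_mem hy, Pi.one_apply, mul_one]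
              have hd2 : dist (g₀ (b.mulVec (ω + sv s))) (g₀ (b.mulVec (u + sv s))) < ρ :=
                hδ₀p (lt_of_lt_of_le hdist (min_le_left _ _))
              calc D (h (b.mulVec (ω + sv s))) (h (b.mulVec (u + sv s)))
                  ≤ ENNReal.ofReal |g₀ (b.mulVec (ω + sv s)) - g₀ (b.mulVec (u + sv s))| :=
                    D_ofReal _ _
                _ ≤ ENNReal.ofReal ρ := ENNReal.ofReal_le_ofReal
                    (by rw [← Real.dist_eq]; exact hd2.le)
            · have hyK : g₀ (b.mulVec (ω + sv s)) = 0 :=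
                image_eq_zero_of_notMem_tsupport
                  (fun hmem => hy (Metric.self_subset_cthickening _ hmem))
              have hzK : g₀ (b.mulVec (u + sv s)) = 0 := by
                by_contra hz
                refine hy (Metric.mem_cthickening_of_dist_le _ _ 1 _
                  (subset_tsupport g₀ hz) ?_)
                exact le_trans hdist.le (min_le_right _ _)
              simp [hhdef, hyK, hzK, D]
          refine le_trans (setLIntegral_mono measurable_const hbound) ?_
          rw [setLIntegral_const, volQd, mul_one]
      _ = ENNReal.ofReal ρ * (c₀ * ∑' s : Fin d → ℤ,
            K'.indicator 1 (b.mulVec (ω + sv s))) := by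
          rw [ENNReal.tsum_mul_left, ← mul_assoc, ← mul_assoc, mul_comm c₀ (ENNReal.ofReal ρ)]
  have termB : ∫⁻ ω in Qd d,
      D (c₀ * ∑' s : Fin d → ℤ, h (b.mulVec (ω + sv s))) (∫⁻ x, h x) ≤ ε3 := by
    calc ∫⁻ ω in Qd d, D (c₀ * ∑' s : Fin d → ℤ, h (b.mulVec (ω + sv s))) (∫⁻ x, h x)
        ≤ ∫⁻ ω in Qd d, ENNReal.ofReal ρ *
            (c₀ * ∑' s : Fin d → ℤ, K'.indicator 1 (b.mulVec (ω + sv s))) := by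
          refine setLIntegral_mono ?_ termBpt
          exact (measurable_const.mul ((Measurable.ennreal_tsum fun s =>
            hmeas_s (K'.indicator 1) (measurable_one.indicator hK'meas) s).const_mul c₀))
      _ = ENNReal.ofReal ρ * (c₀ * ∫⁻ ω in Qd d,
            ∑' s : Fin d → ℤ, K'.indicator 1 (b.mulVec (ω + sv s))) := by
          rw [lintegral_const_mul _ ((Measurable.ennreal_tsum fun s =>
            hmeas_s (K'.indicator 1) (measurable_one.indicator hK'meas) s).const_mul c₀),
            lintegral_const_mul _ (Measurable.ennreal_tsum fun s =>
            hmeas_s (K'.indicator 1) (measurable_one.indicator hK'meas) s)]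
      _ = ENNReal.ofReal ρ * (c₀ * ((ENNReal.ofReal |b.det|)⁻¹ * ∫⁻ x, K'.indicator 1 x)) := by
          rw [hMind]
      _ = ENNReal.ofReal ρ * volume K' := by
          rw [← hc₀def, ← mul_assoc c₀, ENNReal.mul_inv_cancel hc₀0 hc₀top, one_mul,
            lintegral_indicator_one hK'meas]
      _ ≤ ε3 := hρV
  -- combine
  have hmeasA : Measurable fun ω : Fin d → ℝ =>
      D (c₀ * ∑' s : Fin d → ℤ, φ (b.mulVec (ω + sv s)))
        (c₀ * ∑' s : Fin d → ℤ, h (b.mulVec (ω + sv s))) := by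
    have m1 : Measurable fun ω : Fin d → ℝ =>
        c₀ * ∑' s : Fin d → ℤ, φ (b.mulVec (ω + sv s)) :=
      (Measurable.ennreal_tsum fun s => hmeas_s φ hφm s).const_mul c₀
    have m2 : Measurable fun ω : Fin d → ℝ =>
        c₀ * ∑' s : Fin d → ℤ, h (b.mulVec (ω + sv s)) :=
      (Measurable.ennreal_tsum fun s => hmeas_s h hhm s).const_mul c₀
    exact (m1.sub m2).add (m2.sub m1)
  have hmeasB : Measurable fun ω : Fin d → ℝ =>
      D (c₀ * ∑' s : Fin d → ℤ, h (b.mulVec (ω + sv s))) (∫⁻ x, h x) := by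
    have m2 : Measurable fun ω : Fin d → ℝ =>
        c₀ * ∑' s : Fin d → ℤ, h (b.mulVec (ω + sv s)) :=
      (Measurable.ennreal_tsum fun s => hmeas_s h hhm s).const_mul c₀
    exact (m2.sub measurable_const).add (measurable_const.sub m2)
  calc ∫⁻ ω in Qd d, D (ENNReal.ofReal |b.det| *
          ∑' s : Fin d → ℤ, ENNReal.ofReal (φr (b.mulVec (ω + sv s)))) (∫⁻ x, φ x)
      ≤ ∫⁻ ω in Qd d,
          (D (c₀ * ∑' s : Fin d → ℤ, φ (b.mulVec (ω + sv s)))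
            (c₀ * ∑' s : Fin d → ℤ, h (b.mulVec (ω + sv s))) +
          (D (c₀ * ∑' s : Fin d → ℤ, h (b.mulVec (ω + sv s))) (∫⁻ x, h x) +
            D (∫⁻ x, h x) (∫⁻ x, φ x))) := by
        refine lintegral_mono fun ω => ?_
        calc D (c₀ * ∑' s : Fin d → ℤ, φ (b.mulVec (ω + sv s))) (∫⁻ x, φ x)
            ≤ D (c₀ * ∑' s : Fin d → ℤ, φ (b.mulVec (ω + sv s)))
                (c₀ * ∑' s : Fin d → ℤ, h (b.mulVec (ω + sv s))) +
              D (c₀ * ∑' s : Fin d → ℤ, h (b.mulVec (ω + sv s))) (∫⁻ x, φ x) := D_triangle _ _ _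
          _ ≤ _ := by
              refine add_le_add_right ?_ _
              exact D_triangle _ _ _
    _ = (∫⁻ ω in Qd d, D (c₀ * ∑' s : Fin d → ℤ, φ (b.mulVec (ω + sv s)))
            (c₀ * ∑' s : Fin d → ℤ, h (b.mulVec (ω + sv s)))) +
          ((∫⁻ ω in Qd d, D (c₀ * ∑' s : Fin d → ℤ, h (b.mulVec (ω + sv s))) (∫⁻ x, h x)) +
            (∫⁻ _ in Qd d, D (∫⁻ x, h x) (∫⁻ x, φ x) ∂volume)) := by
        rw [lintegral_add_left hmeasA, lintegral_add_left hmeasB]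
    _ ≤ ε3 + (ε3 + ε3) := by
        refine add_le_add termA (add_le_add termB ?_)
        rw [setLIntegral_const, volQd, mul_one]
        exact termC
    _ = min ε 1 := by rw [← add_assoc]; exact ENNReal.add_thirds _
    _ ≤ ε := min_le_left _ _

end PgramAux

open PgramAux

/-- For `f ∈ Lᵖ(ℝᵈ)`, the p-Grammian `f_{b,p}` converges to the constant `‖f‖_p`
in `Lᵖ([0,1]ᵈ)` as the operator norm of the invertible matrix `b` tends to `0`. -/
theorem pgram_tendsto_Lp {d : ℕ} (p : ℝ) (hp : 1 ≤ p) (f : (Fin d → ℝ) → ℂ)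
    (hf : MemLp f (ENNReal.ofReal p) (volume : Measure (Fin d → ℝ))) :
    Tendsto
      (fun b : Matrix (Fin d) (Fin d) ℝ =>
        eLpNorm
          (fun ω => pgram p b f ω -
            (eLpNorm f (ENNReal.ofReal p) (volume : Measure (Fin d → ℝ))).toReal)
          (ENNReal.ofReal p) (volume.restrict (Set.Icc (0 : Fin d → ℝ) 1)))
      (smallGL d) (nhds 0) := by
  have hp0 : 0 < p := lt_of_lt_of_le one_pos hp
  have hp'0 : ENNReal.ofReal p ≠ 0 := by
    rw [Ne, ENNReal.ofReal_eq_zero, not_le]; exact hp0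
  have hp'top : ENNReal.ofReal p ≠ ⊤ := ENNReal.ofReal_ne_top
  have htoReal : (ENNReal.ofReal p).toReal = p := ENNReal.toReal_ofReal hp0.le
  -- measurable representative
  obtain ⟨f', hf'sm, hff'⟩ : ∃ f' : (Fin d → ℝ) → ℂ,
      StronglyMeasurable f' ∧ f =ᵐ[volume] f' :=
    ⟨hf.1.mk f, hf.1.stronglyMeasurable_mk, hf.1.ae_eq_mk⟩
  have hf' : MemLp f' (ENNReal.ofReal p) volume := hf.ae_eq hff'
  have hφrm : Measurable fun x => ‖f' x‖ ^ p :=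
    (Real.continuous_rpow_const hp0.le).measurable.comp hf'sm.measurable.norm
  have hφint : Integrable (fun x => ‖f' x‖ ^ p) (volume : Measure (Fin d → ℝ)) := by
    have := hf'.integrable_norm_rpow hp'0 hp'top
    rwa [htoReal] at this
  have hItop : (∫⁻ x, ENNReal.ofReal (‖f' x‖ ^ p)) ≠ ⊤ := hφint.lintegral_lt_top.ne
  have hofr : ∀ y : ℂ, (‖y‖₊ : ℝ≥0∞) ^ p = ENNReal.ofReal (‖y‖ ^ p) := fun y => by
    rw [← enorm_eq_nnnorm, ← ofReal_norm, ENNReal.ofReal_rpow_of_nonneg (norm_nonneg _) hp0.le]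
  have hconst : (eLpNorm f (ENNReal.ofReal p) volume).toReal
      = (∫⁻ x, ENNReal.ofReal (‖f' x‖ ^ p)).toReal ^ (1/p) := by
    rw [eLpNorm_congr_ae hff']
    rw [eLpNorm_eq_lintegral_rpow_enorm_toReal hp'0 hp'top]
    rw [htoReal]
    rw [ENNReal.toReal_rpow]
    congr 2
    exact lintegral_congr fun x => hofr (f' x)
  have hcore := PgramAux.core (fun x => ‖f' x‖ ^ p) hφrm hφint
  rw [ENNReal.tendsto_nhds_zero] at hcore ⊢
  intro ε hε
  have hεp : (0:ℝ≥0∞) < ε ^ p := by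
    rw [pos_iff_ne_zero, Ne, ENNReal.rpow_eq_zero_iff]
    rintro (⟨h0, -⟩ | ⟨-, hneg⟩)
    · exact hε.ne' h0
    · exact absurd hneg (not_lt.mpr hp0.le)
  filter_upwards [hcore (ε ^ p) hεp, PgramAux.eventually_smallGL one_pos] with b hTb hb1
  obtain ⟨hbU, -⟩ := hb1
  have hdet := PgramAux.det_ne_zero hbU
  have hc₀0 : ENNReal.ofReal |b.det| ≠ 0 := by
    rw [Ne, ENNReal.ofReal_eq_zero, not_le]; exact abs_pos.mpr hdet
  have hc₀top : ENNReal.ofReal |b.det| ≠ ⊤ := ENNReal.ofReal_ne_top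
  have hSm : Measurable fun ω : Fin d → ℝ =>
      ∑' s : Fin d → ℤ, ENNReal.ofReal (‖f' (b.mulVec (ω + sv s))‖ ^ p) :=
    Measurable.ennreal_tsum fun s =>
      hφrm.ennreal_ofReal.comp (cont_affine b (sv s)).measurable
  have hSfin : ∀ᵐ ω ∂(volume.restrict (Qd d)),
      (∑' s : Fin d → ℤ, ENNReal.ofReal (‖f' (b.mulVec (ω + sv s))‖ ^ p)) < ⊤ := by
    refine ae_lt_top hSm ?_
    rw [master hbU _ hφrm.ennreal_ofReal]
    exact ENNReal.mul_ne_top (ENNReal.inv_ne_top.mpr hc₀0) hItop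
  have hfeq : ∀ᵐ ω ∂(volume.restrict (Qd d)), ∀ s : Fin d → ℤ,
      f (b.mulVec (ω + sv s)) = f' (b.mulVec (ω + sv s)) := by
    refine ae_restrict_of_ae ?_
    rw [ae_all_iff]
    intro s
    have hN : volume {x : Fin d → ℝ | ¬ f x = f' x} = 0 := hff'
    have hnull := nullpre hbU (sv s) hN
    rw [ae_iff]
    exact hnull
  have hptwise : ∀ᵐ ω ∂(volume.restrict (Qd d)),
      (‖pgram p b f ω - (eLpNorm f (ENNReal.ofReal p) volume).toReal‖₊ : ℝ≥0∞) ^ p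
        ≤ PgramAux.D (ENNReal.ofReal |b.det| *
            ∑' s : Fin d → ℤ, ENNReal.ofReal (‖f' (b.mulVec (ω + sv s))‖ ^ p))
          (∫⁻ x, ENNReal.ofReal (‖f' x‖ ^ p)) := by
    filter_upwards [hSfin, hfeq] with ω hS1 hf1
    have hGtop : ENNReal.ofReal |b.det| *
        (∑' s : Fin d → ℤ, ENNReal.ofReal (‖f' (b.mulVec (ω + sv s))‖ ^ p)) ≠ ⊤ :=
      ENNReal.mul_ne_top hc₀top hS1.ne
    have hA : pgram p b f ω = ((ENNReal.ofReal |b.det| *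
        ∑' s : Fin d → ℤ, ENNReal.ofReal (‖f' (b.mulVec (ω + sv s))‖ ^ p)).toReal)
          ^ (1/p) := by
      simp only [pgram]
      congr 1
      have ht1 : ∑' s : Fin d → ℤ, ‖f (b.mulVec (ω + fun i => ((s i : ℝ))))‖ ^ p
          = ∑' s : Fin d → ℤ,
            (ENNReal.ofReal (‖f' (b.mulVec (ω + sv s))‖ ^ p)).toReal := by
        refine tsum_congr fun s => ?_
        rw [show (fun i => ((s i : ℝ))) = sv s from rfl, hf1 s,
          ENNReal.toReal_ofReal (by positivity)]
      rw [ht1, ← ENNReal.tsum_toReal_eq (fun s => ENNReal.ofReal_ne_top),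
        ENNReal.toReal_mul, ENNReal.toReal_ofReal (abs_nonneg _)]
    rw [hA, hconst, ← enorm_eq_nnnorm, Real.enorm_eq_ofReal_abs,
      ENNReal.ofReal_rpow_of_nonneg (abs_nonneg _) hp0.le]
    refine le_trans (ENNReal.ofReal_le_ofReal ?_) (PgramAux.D_toReal hGtop hItop)
    have h1 := PgramAux.abs_rpow_inv_sub_le hp
      (ENNReal.toReal_nonneg (a := ENNReal.ofReal |b.det| *
        ∑' s : Fin d → ℤ, ENNReal.ofReal (‖f' (b.mulVec (ω + sv s))‖ ^ p)))
      (ENNReal.toReal_nonneg (a := ∫⁻ x, ENNReal.ofReal (‖f' x‖ ^ p)))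
    calc |((ENNReal.ofReal |b.det| *
          ∑' s : Fin d → ℤ, ENNReal.ofReal (‖f' (b.mulVec (ω + sv s))‖ ^ p)).toReal)
            ^ (1/p) - ((∫⁻ x, ENNReal.ofReal (‖f' x‖ ^ p)).toReal) ^ (1/p)| ^ p
        ≤ (|(ENNReal.ofReal |b.det| *
          ∑' s : Fin d → ℤ, ENNReal.ofReal (‖f' (b.mulVec (ω + sv s))‖ ^ p)).toReal -
          (∫⁻ x, ENNReal.ofReal (‖f' x‖ ^ p)).toReal| ^ (1/p)) ^ p :=
          Real.rpow_le_rpow (abs_nonneg _) h1 hp0.le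
      _ = _ := by
          rw [← Real.rpow_mul (abs_nonneg _), one_div, inv_mul_cancel₀ hp0.ne',
            Real.rpow_one]
  have key : ∫⁻ ω in Set.Icc (0 : Fin d → ℝ) 1,
      (‖pgram p b f ω - (eLpNorm f (ENNReal.ofReal p) volume).toReal‖₊ : ℝ≥0∞) ^ p ∂volume
        ≤ ε ^ p := by
    rw [restrict_Icc_eq]
    calc ∫⁻ ω in Qd d,
        (‖pgram p b f ω - (eLpNorm f (ENNReal.ofReal p) volume).toReal‖₊ : ℝ≥0∞) ^ p ∂volume
        ≤ ∫⁻ ω in Qd d, PgramAux.D (ENNReal.ofReal |b.det| *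
            ∑' s : Fin d → ℤ, ENNReal.ofReal (‖f' (b.mulVec (ω + sv s))‖ ^ p))
          (∫⁻ x, ENNReal.ofReal (‖f' x‖ ^ p)) ∂volume := lintegral_mono_ae hptwise
      _ ≤ ε ^ p := hTb
  rw [eLpNorm_eq_lintegral_rpow_enorm_toReal hp'0 hp'top, htoReal]
  calc (∫⁻ ω in Set.Icc (0 : Fin d → ℝ) 1,
      (‖pgram p b f ω - (eLpNorm f (ENNReal.ofReal p) volume).toReal‖₊ : ℝ≥0∞) ^ p ∂volume)
        ^ (1/p)
      ≤ (ε ^ p) ^ (1/p) := ENNReal.rpow_le_rpow key (by positivity)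
    _ = ε := by
        rw [← ENNReal.rpow_mul, mul_one_div, div_self hp0.ne', ENNReal.rpow_one]
end
end

section
/- For any 1 ≤ p < ∞, any f, g ∈ Lᵖ(ℝᵈ), and any b ∈ GL_d(ℝ), the p-Grammians satisfy ‖f_{b,p} - g_{b,p}‖_{Lᵖ([0,1]ᵈ)} ≤ ‖f - g‖_{Lᵖ(ℝᵈ)}. -/
open MeasureTheory Filter
noncomputable section

open scoped ENNReal NNReal

namespace PgramAux

open Set

variable {d : ℕ}

/-- The `ℝ≥0∞`-valued `p`-th power of the Grammian. -/
def Phi (p : ℝ) (b : Matrix (Fin d) (Fin d) ℝ) (h : (Fin d → ℝ) → ℂ) (ω : Fin d → ℝ) : ℝ≥0∞ :=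
  ENNReal.ofReal |b.det| *
    ∑' s : Fin d → ℤ, (‖h (b.mulVec (ω + fun i => (s i : ℝ)))‖₊ : ℝ≥0∞) ^ p

lemma tiling (G : (Fin d → ℝ) → ℝ≥0∞) :
    ∑' s : Fin d → ℤ, ∫⁻ ω in Set.Icc (0:Fin d → ℝ) 1, G (ω + fun i => (s i:ℝ)) = ∫⁻ x, G x := by
  set S : (Fin d → ℤ) → Set (Fin d → ℝ) :=
    fun s => Set.pi Set.univ (fun i => Set.Ico (s i : ℝ) (s i + 1)) with hS
  have hSmeas : ∀ s, MeasurableSet (S s) := fun s =>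
    MeasurableSet.univ_pi (fun i => measurableSet_Ico)
  have hae : S 0 =ᵐ[(volume : Measure (Fin d → ℝ))] Set.Icc (0:Fin d → ℝ) 1 := by
    rw [Filter.eventuallyEq_set]
    have h1 : S 0 \ Set.Icc (0:Fin d → ℝ) 1 = ∅ := by
      ext x
      simp only [hS, Set.mem_diff, Set.mem_pi, Set.mem_univ, forall_true_left, Set.mem_Ico,
        Set.mem_Icc, Set.mem_empty_iff_false, iff_false, not_and, not_not, Pi.zero_apply,
        Int.cast_zero, zero_add]
      intro h h2
      exact (h2 (fun i => (h i).1)) (fun i => le_of_lt (h i).2)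
    have h2 : Set.Icc (0:Fin d → ℝ) 1 \ S 0 ⊆ ⋃ i : Fin d, {x : Fin d → ℝ | x i = 1} := by
      intro x hx
      simp only [Set.mem_diff, Set.mem_Icc, hS, Set.mem_pi, Set.mem_univ, forall_true_left,
        Set.mem_Ico, Pi.zero_apply, Int.cast_zero, zero_add, not_forall] at hx
      obtain ⟨⟨h0, h1'⟩, i, hi⟩ := hx
      refine Set.mem_iUnion.2 ⟨i, ?_⟩
      simp only [Set.mem_setOf_eq]
      rcases not_and_or.1 hi with h | h
      · exact absurd (h0 i) h
      · exact le_antisymm (h1' i) (not_lt.1 h)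
    have hnull : (volume : Measure (Fin d → ℝ)) (⋃ i : Fin d, {x : Fin d → ℝ | x i = 1}) = 0 := by
      refine measure_iUnion_null fun i => ?_
      have : {x : Fin d → ℝ | x i = 1}
          = Set.pi Set.univ (fun j => if j = i then {(1:ℝ)} else Set.univ) := by
        ext x
        simp only [Set.mem_setOf_eq, Set.mem_pi, Set.mem_univ, forall_true_left]
        constructor
        · intro h j; by_cases hj : j = i <;> simp [hj, h]
        · intro h; have := h i; simpa using this
      rw [this, volume_pi_pi]
      refine Finset.prod_eq_zero (Finset.mem_univ i) ?_
      simp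
    filter_upwards [measure_eq_zero_iff_ae_notMem.1 hnull] with x hx
    constructor
    · intro h
      by_contra hc
      have hmem : x ∈ S 0 \ Set.Icc (0:Fin d → ℝ) 1 := ⟨h, hc⟩
      rw [h1] at hmem
      exact hmem
    · intro h
      by_contra hc
      exact hx (h2 ⟨h, hc⟩)
  have htrans : ∀ s : Fin d → ℤ,
      (∫⁻ ω in S 0, G (ω + fun i => (s i:ℝ))) = ∫⁻ x in S s, G x := by
    intro s
    have hmp : MeasurePreserving (fun ω : Fin d → ℝ => ω + fun i => (s i:ℝ)) volume volume :=
      measurePreserving_add_right volume _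
    have hemb : MeasurableEmbedding (fun ω : Fin d → ℝ => ω + fun i => (s i:ℝ)) :=
      (MeasurableEquiv.addRight (fun i => (s i:ℝ))).measurableEmbedding
    rw [hmp.setLIntegral_comp_emb hemb G (S 0)]
    have himg : ((fun ω : Fin d → ℝ => ω + fun i => (s i:ℝ)) '' S 0) = S s := by
      ext x
      simp only [hS, Set.mem_image, Set.mem_pi, Set.mem_univ, forall_true_left, Set.mem_Ico,
        Pi.zero_apply, Int.cast_zero, zero_add]
      constructor
      · rintro ⟨y, hy, rfl⟩ i
        simp only [Pi.add_apply]
        constructor <;> linarith [(hy i).1, (hy i).2]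
      · intro h
        refine ⟨x - fun i => (s i:ℝ), fun i => ?_, by ring⟩
        simp only [Pi.sub_apply]
        constructor <;> linarith [(h i).1, (h i).2]
    rw [himg]
  have hdisj : Pairwise (Function.onFun Disjoint S) := by
    intro s t hst
    rw [Function.onFun, Set.disjoint_left]
    intro x hxs hxt
    apply hst
    funext i
    have h1 := hxs i trivial
    have h2 := hxt i trivial
    simp only [Set.mem_Ico] at h1 h2
    have e1 : ⌊x i⌋ = s i := Int.floor_eq_iff.2 ⟨h1.1, h1.2⟩
    have e2 : ⌊x i⌋ = t i := Int.floor_eq_iff.2 ⟨h2.1, h2.2⟩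
    rw [← e1, e2]
  have hunion : (⋃ s, S s) = Set.univ := by
    ext x
    simp only [Set.mem_iUnion, Set.mem_univ, iff_true, hS, Set.mem_pi, Set.mem_univ,
      forall_true_left, Set.mem_Ico]
    exact ⟨fun i => ⌊x i⌋, fun i => ⟨Int.floor_le _, Int.lt_floor_add_one _⟩⟩
  calc ∑' s : Fin d → ℤ, ∫⁻ ω in Set.Icc (0:Fin d → ℝ) 1, G (ω + fun i => (s i:ℝ))
      = ∑' s : Fin d → ℤ, ∫⁻ x in S s, G x := by
        refine tsum_congr fun s => ?_
        rw [← Measure.restrict_congr_set hae, htrans s]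
    _ = ∫⁻ x in ⋃ s, S s, G x := (lintegral_iUnion hSmeas hdisj _).symm
    _ = ∫⁻ x, G x := by rw [hunion, Measure.restrict_univ]

lemma cov (b : Matrix (Fin d) (Fin d) ℝ) (hb : b.det ≠ 0)
    (G : (Fin d → ℝ) → ℝ≥0∞) (hG : Measurable G) :
    ENNReal.ofReal |b.det| * ∫⁻ x, G (b.mulVec x) = ∫⁻ y, G y := by
  have hlin : Measurable (Matrix.toLin' b) :=
    (LinearMap.continuous_on_pi _).measurable
  have h1 : ∫⁻ x, G (b.mulVec x) = ∫⁻ y, G y ∂(Measure.map (Matrix.toLin' b) volume) := by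
    rw [lintegral_map hG hlin]
    simp_rw [Matrix.toLin'_apply]
  rw [h1, Real.map_matrix_volume_pi_eq_smul_volume_pi hb, lintegral_smul_measure, smul_eq_mul,
    ← mul_assoc, ← ENNReal.ofReal_mul (abs_nonneg _), ← abs_mul, mul_inv_cancel₀ hb,
    abs_one, ENNReal.ofReal_one, one_mul]

lemma meas_comp (b : Matrix (Fin d) (Fin d) ℝ) (c : Fin d → ℝ) :
    Measurable (fun ω : Fin d → ℝ => b.mulVec (ω + c)) := by
  have h1 : Measurable fun ω : Fin d → ℝ => ω + c := measurable_add_const c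
  have h2 : Measurable (Matrix.toLin' b) := (LinearMap.continuous_on_pi _).measurable
  simpa [Function.comp_def, Matrix.toLin'_apply] using h2.comp h1

lemma meas_term (p : ℝ) (b : Matrix (Fin d) (Fin d) ℝ) {h : (Fin d → ℝ) → ℂ}
    (hm : Measurable h) (c : Fin d → ℝ) :
    Measurable fun ω : Fin d → ℝ => (‖h (b.mulVec (ω + c))‖₊ : ℝ≥0∞) ^ p :=
  ENNReal.continuous_rpow_const.measurable.comp
    (measurable_coe_nnreal_ennreal.comp ((hm.comp (meas_comp b c)).nnnorm))

lemma Phi_measurable (p : ℝ) (b : Matrix (Fin d) (Fin d) ℝ) {h : (Fin d → ℝ) → ℂ}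
    (hm : Measurable h) : Measurable (Phi p b h) :=
  measurable_const.mul (Measurable.ennreal_tsum fun s => meas_term p b hm _)

lemma key (p : ℝ) (hp : 0 < p) (b : Matrix (Fin d) (Fin d) ℝ) (hb : b.det ≠ 0)
    {h : (Fin d → ℝ) → ℂ} (hm : Measurable h) :
    ∫⁻ ω in Set.Icc (0:Fin d → ℝ) 1, Phi p b h ω = ∫⁻ x, (‖h x‖₊ : ℝ≥0∞) ^ p := by
  have hGm : Measurable fun x : Fin d → ℝ => (‖h x‖₊ : ℝ≥0∞) ^ p :=
    ENNReal.continuous_rpow_const.measurable.comp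
      (measurable_coe_nnreal_ennreal.comp hm.nnnorm)
  unfold Phi
  rw [lintegral_const_mul' _ _ ENNReal.ofReal_ne_top,
    lintegral_tsum (fun s => (meas_term p b hm _).aemeasurable),
    tiling (fun x => (‖h (b.mulVec x)‖₊ : ℝ≥0∞) ^ p)]
  exact cov b hb _ hGm

lemma phi_repr (p : ℝ) (hp : 0 < p) (b : Matrix (Fin d) (Fin d) ℝ) (hb : b.det ≠ 0)
    (h : (Fin d → ℝ) → ℂ) (ω : Fin d → ℝ) (hfin : Phi p b h ω ≠ ⊤) :
    pgram p b h ω = ((Phi p b h ω) ^ (1/p)).toReal := by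
  set a : (Fin d → ℤ) → ℝ := fun s => ‖h (b.mulVec (ω + fun i => (s i:ℝ)))‖ ^ p with ha
  have ha_nonneg : ∀ s, 0 ≤ a s := fun s => Real.rpow_nonneg (norm_nonneg _) _
  have hterm : ∀ s : Fin d → ℤ,
      (‖h (b.mulVec (ω + fun i => (s i:ℝ)))‖₊ : ℝ≥0∞) ^ p = ENNReal.ofReal (a s) := by
    intro s
    rw [← enorm_eq_nnnorm, ← ofReal_norm, ENNReal.ofReal_rpow_of_nonneg (norm_nonneg _) hp.le]
  have hT : Phi p b h ω = ENNReal.ofReal |b.det| * ∑' s, ENNReal.ofReal (a s) := by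
    unfold Phi
    exact congrArg _ (tsum_congr hterm)
  have hTfin : (∑' s, ENNReal.ofReal (a s)) ≠ ⊤ := by
    intro htop
    apply hfin
    rw [hT, htop, ENNReal.mul_top]
    simp only [ne_eq, ENNReal.ofReal_eq_zero, not_le]
    exact abs_pos.2 hb
  have hsum : Summable a := by
    have h1 : (∑' s, ((a s).toNNReal : ℝ≥0∞)) ≠ ⊤ := by
      simpa [ENNReal.ofReal] using hTfin
    have h2 := ENNReal.tsum_coe_ne_top_iff_summable.1 h1
    have h3 := NNReal.summable_coe.2 h2
    exact h3.congr fun s => Real.coe_toNNReal _ (ha_nonneg s)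
  have hofReal : (∑' s, ENNReal.ofReal (a s)) = ENNReal.ofReal (∑' s, a s) :=
    (ENNReal.ofReal_tsum_of_nonneg ha_nonneg hsum).symm
  have hX : 0 ≤ |b.det| * ∑' s, a s := mul_nonneg (abs_nonneg _) (tsum_nonneg ha_nonneg)
  rw [hT, hofReal, ← ENNReal.ofReal_mul (abs_nonneg _),
    ENNReal.ofReal_rpow_of_nonneg hX (by positivity),
    ENNReal.toReal_ofReal (Real.rpow_nonneg hX _)]
  rfl

lemma Phi_sub_symm (p : ℝ) (b : Matrix (Fin d) (Fin d) ℝ) (f g : (Fin d → ℝ) → ℂ) (ω : Fin d → ℝ) :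
    Phi p b (fun x => g x - f x) ω = Phi p b (fun x => f x - g x) ω := by
  unfold Phi
  congr 1
  refine tsum_congr fun s => ?_
  simp only
  rw [← nnnorm_neg, neg_sub]

lemma mink (p : ℝ) (hp : 1 ≤ p) (b : Matrix (Fin d) (Fin d) ℝ)
    (f g : (Fin d → ℝ) → ℂ) (ω : Fin d → ℝ) :
    (Phi p b f ω) ^ (1/p) ≤
      (Phi p b g ω) ^ (1/p) + (Phi p b (fun x => f x - g x) ω) ^ (1/p) := by
  have hp0 : (0:ℝ) ≤ p := le_trans zero_le_one hp
  set u : (Fin d → ℤ) → ℝ≥0∞ :=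
    fun s => (‖g (b.mulVec (ω + fun i => (s i:ℝ)))‖₊ : ℝ≥0∞) with hu
  set v : (Fin d → ℤ) → ℝ≥0∞ :=
    fun s => (‖f (b.mulVec (ω + fun i => (s i:ℝ))) - g (b.mulVec (ω + fun i => (s i:ℝ)))‖₊ : ℝ≥0∞)
    with hv
  have hmink : (∑' s, (u + v) s ^ p) ^ (1/p)
      ≤ (∑' s, u s ^ p) ^ (1/p) + (∑' s, v s ^ p) ^ (1/p) := by
    rw [← lintegral_count, ← lintegral_count, ← lintegral_count]
    exact ENNReal.lintegral_Lp_add_le (measurable_of_countable _).aemeasurable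
      (measurable_of_countable _).aemeasurable hp
  have htri : ∀ s : Fin d → ℤ,
      (‖f (b.mulVec (ω + fun i => (s i:ℝ)))‖₊ : ℝ≥0∞) ^ p ≤ (u + v) s ^ p := by
    intro s
    refine ENNReal.rpow_le_rpow ?_ hp0
    have h1 : ‖f (b.mulVec (ω + fun i => (s i:ℝ)))‖₊
        ≤ ‖g (b.mulVec (ω + fun i => (s i:ℝ)))‖₊
          + ‖f (b.mulVec (ω + fun i => (s i:ℝ))) - g (b.mulVec (ω + fun i => (s i:ℝ)))‖₊ := by
      have := nnnorm_add_le (g (b.mulVec (ω + fun i => (s i:ℝ))))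
        (f (b.mulVec (ω + fun i => (s i:ℝ))) - g (b.mulVec (ω + fun i => (s i:ℝ))))
      simpa using this
    simp only [Pi.add_apply, hu, hv]
    exact_mod_cast h1
  have h2 : (Phi p b f ω) ^ (1/p)
      ≤ (ENNReal.ofReal |b.det|) ^ (1/p) * (∑' s, (u + v) s ^ p) ^ (1/p) := by
    unfold Phi
    rw [ENNReal.mul_rpow_of_nonneg _ _ (by positivity)]
    exact mul_le_mul_right (ENNReal.rpow_le_rpow (ENNReal.tsum_le_tsum htri) (by positivity)) _
  refine le_trans h2 ?_
  calc (ENNReal.ofReal |b.det|) ^ (1/p) * (∑' s, (u + v) s ^ p) ^ (1/p)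
      ≤ (ENNReal.ofReal |b.det|) ^ (1/p)
        * ((∑' s, u s ^ p) ^ (1/p) + (∑' s, v s ^ p) ^ (1/p)) := mul_le_mul_right hmink _
    _ = (Phi p b g ω) ^ (1/p) + (Phi p b (fun x => f x - g x) ω) ^ (1/p) := by
        rw [mul_add]
        unfold Phi
        rw [ENNReal.mul_rpow_of_nonneg _ _ (by positivity),
          ENNReal.mul_rpow_of_nonneg _ _ (by positivity)]

end PgramAux

open PgramAux

theorem pgram_contraction_meas {d : ℕ} (p : ℝ) (hp : 1 ≤ p) (f g : (Fin d → ℝ) → ℂ)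
    (hfm : Measurable f) (hgm : Measurable g)
    (hf : MemLp f (ENNReal.ofReal p) (volume : Measure (Fin d → ℝ)))
    (hg : MemLp g (ENNReal.ofReal p) (volume : Measure (Fin d → ℝ)))
    (b : Matrix (Fin d) (Fin d) ℝ) (hb : b.det ≠ 0) :
    eLpNorm (fun ω => pgram p b f ω - pgram p b g ω) (ENNReal.ofReal p)
        (volume.restrict (Set.Icc (0 : Fin d → ℝ) 1)) ≤
      eLpNorm (fun x => f x - g x) (ENNReal.ofReal p) (volume : Measure (Fin d → ℝ)) := by
  have hp0 : (0:ℝ) < p := lt_of_lt_of_le one_pos hp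
  have hpne : (ENNReal.ofReal p) ≠ 0 := by
    simp only [ne_eq, ENNReal.ofReal_eq_zero, not_le]; exact hp0
  have hpnetop : (ENNReal.ofReal p) ≠ ⊤ := ENNReal.ofReal_ne_top
  have htoReal : (ENNReal.ofReal p).toReal = p := ENNReal.toReal_ofReal hp0.le
  set h' : (Fin d → ℝ) → ℂ := fun x => f x - g x with hh'
  have hh'm : Measurable h' := hfm.sub hgm
  have hmemh' : MemLp h' (ENNReal.ofReal p) (volume : Measure (Fin d → ℝ)) := hf.sub hg
  have lint_ne_top : ∀ (k : (Fin d → ℝ) → ℂ),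
      MemLp k (ENNReal.ofReal p) (volume : Measure (Fin d → ℝ)) →
      (∫⁻ x, (‖k x‖₊ : ℝ≥0∞) ^ p ∂(volume : Measure (Fin d → ℝ))) ≠ ⊤ := by
    intro k hk
    have h2 := hk.2
    rw [eLpNorm_eq_lintegral_rpow_enorm_toReal hpne hpnetop, htoReal] at h2
    simp only [enorm_eq_nnnorm] at h2
    intro htop
    rw [htop, ENNReal.top_rpow_of_pos (by positivity : (0:ℝ) < 1/p)] at h2
    exact (lt_irrefl _ h2)
  have hfin : ∀ (k : (Fin d → ℝ) → ℂ), Measurable k →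
      MemLp k (ENNReal.ofReal p) (volume : Measure (Fin d → ℝ)) →
      ∀ᵐ ω ∂(volume.restrict (Set.Icc (0:Fin d → ℝ) 1)), Phi p b k ω ≠ ⊤ := by
    intro k hkm hk
    have hint : (∫⁻ ω in Set.Icc (0:Fin d → ℝ) 1, Phi p b k ω) ≠ ⊤ := by
      rw [key p hp0 b hb hkm]; exact lint_ne_top k hk
    exact (ae_lt_top (Phi_measurable p b hkm) hint).mono fun ω hω => hω.ne
  have hbound : ∀ᵐ ω ∂(volume.restrict (Set.Icc (0:Fin d → ℝ) 1)),
      ‖pgram p b f ω - pgram p b g ω‖ ≤ ‖((Phi p b h' ω) ^ (1/p)).toReal‖ := by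
    filter_upwards [hfin f hfm hf, hfin g hgm hg, hfin h' hh'm hmemh'] with ω hA hB hC
    have hAr := phi_repr p hp0 b hb f ω hA
    have hBr := phi_repr p hp0 b hb g ω hB
    have hXne : (Phi p b f ω) ^ (1/p) ≠ ⊤ := ENNReal.rpow_ne_top_of_nonneg (by positivity) hA
    have hYne : (Phi p b g ω) ^ (1/p) ≠ ⊤ := ENNReal.rpow_ne_top_of_nonneg (by positivity) hB
    have hZne : (Phi p b h' ω) ^ (1/p) ≠ ⊤ := ENNReal.rpow_ne_top_of_nonneg (by positivity) hC
    have hm1 : (Phi p b f ω) ^ (1/p) ≤ (Phi p b g ω) ^ (1/p) + (Phi p b h' ω) ^ (1/p) :=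
      mink p hp b f g ω
    have hm2 : (Phi p b g ω) ^ (1/p) ≤ (Phi p b f ω) ^ (1/p) + (Phi p b h' ω) ^ (1/p) := by
      have := mink p hp b g f ω
      rwa [Phi_sub_symm] at this
    have ht1 : ((Phi p b f ω) ^ (1/p)).toReal
        ≤ ((Phi p b g ω) ^ (1/p)).toReal + ((Phi p b h' ω) ^ (1/p)).toReal := by
      have := ENNReal.toReal_mono (ENNReal.add_ne_top.2 ⟨hYne, hZne⟩) hm1
      rwa [ENNReal.toReal_add hYne hZne] at this
    have ht2 : ((Phi p b g ω) ^ (1/p)).toReal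
        ≤ ((Phi p b f ω) ^ (1/p)).toReal + ((Phi p b h' ω) ^ (1/p)).toReal := by
      have := ENNReal.toReal_mono (ENNReal.add_ne_top.2 ⟨hXne, hZne⟩) hm2
      rwa [ENNReal.toReal_add hXne hZne] at this
    rw [hAr, hBr, Real.norm_eq_abs, Real.norm_eq_abs, abs_of_nonneg ENNReal.toReal_nonneg]
    rw [abs_sub_le_iff]
    constructor <;> linarith
  refine le_trans (eLpNorm_mono_ae hbound) ?_
  rw [eLpNorm_eq_lintegral_rpow_enorm_toReal hpne hpnetop, htoReal]
  simp only [enorm_eq_nnnorm]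
  have hcongr : (∫⁻ ω in Set.Icc (0:Fin d → ℝ) 1,
        (‖((Phi p b h' ω) ^ (1/p)).toReal‖₊ : ℝ≥0∞) ^ p)
      = ∫⁻ ω in Set.Icc (0:Fin d → ℝ) 1, Phi p b h' ω := by
    refine lintegral_congr_ae ?_
    filter_upwards [hfin h' hh'm hmemh'] with ω hC
    have hY : (Phi p b h' ω) ^ (1/p) ≠ ⊤ := ENNReal.rpow_ne_top_of_nonneg (by positivity) hC
    rw [← enorm_eq_nnnorm, ← ofReal_norm, Real.norm_of_nonneg ENNReal.toReal_nonneg,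
      ENNReal.ofReal_toReal hY, ← ENNReal.rpow_mul, one_div_mul_cancel hp0.ne',
      ENNReal.rpow_one]
  rw [hcongr, key p hp0 b hb hh'm,
    eLpNorm_eq_lintegral_rpow_enorm_toReal hpne hpnetop, htoReal]
  rfl

/-- The p-Grammian is a contraction:
`‖f_{b,p} - g_{b,p}‖_{Lᵖ([0,1]ᵈ)} ≤ ‖f - g‖_{Lᵖ(ℝᵈ)}`. -/
theorem pgram_contraction {d : ℕ} (p : ℝ) (hp : 1 ≤ p) (f g : (Fin d → ℝ) → ℂ)
    (hf : MemLp f (ENNReal.ofReal p) (volume : Measure (Fin d → ℝ)))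
    (hg : MemLp g (ENNReal.ofReal p) (volume : Measure (Fin d → ℝ)))
    (b : Matrix (Fin d) (Fin d) ℝ) (hb : IsUnit b) :
    eLpNorm (fun ω => pgram p b f ω - pgram p b g ω) (ENNReal.ofReal p)
        (volume.restrict (Set.Icc (0 : Fin d → ℝ) 1)) ≤
      eLpNorm (fun x => f x - g x) (ENNReal.ofReal p) (volume : Measure (Fin d → ℝ)) := by
  have hdet : b.det ≠ 0 := ((Matrix.isUnit_iff_isUnit_det b).1 hb).ne_zero
  set f' : (Fin d → ℝ) → ℂ := hf.1.mk f with hf'def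
  set g' : (Fin d → ℝ) → ℂ := hg.1.mk g with hg'def
  have hf'm : Measurable f' := hf.1.stronglyMeasurable_mk.measurable
  have hg'm : Measurable g' := hg.1.stronglyMeasurable_mk.measurable
  have hff' : f =ᵐ[(volume : Measure (Fin d → ℝ))] f' := hf.1.ae_eq_mk
  have hgg' : g =ᵐ[(volume : Measure (Fin d → ℝ))] g' := hg.1.ae_eq_mk
  have hmemf' : MemLp f' (ENNReal.ofReal p) (volume : Measure (Fin d → ℝ)) := hf.ae_eq hff'
  have hmemg' : MemLp g' (ENNReal.ofReal p) (volume : Measure (Fin d → ℝ)) := hg.ae_eq hgg'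
  have hqmp : ∀ s : Fin d → ℤ, Measure.QuasiMeasurePreserving
      (fun ω : Fin d → ℝ => b.mulVec (ω + fun i => (s i:ℝ))) volume volume := by
    intro s
    have hlin : Measurable (Matrix.toLin' b) := (LinearMap.continuous_on_pi _).measurable
    refine ⟨meas_comp b _, ?_⟩
    have heq : (fun ω : Fin d → ℝ => b.mulVec (ω + fun i => (s i:ℝ)))
        = (Matrix.toLin' b) ∘ (fun ω : Fin d → ℝ => ω + fun i => (s i:ℝ)) :=
      funext fun ω => (Matrix.toLin'_apply _ _).symm
    rw [heq, ← Measure.map_map hlin (measurable_add_const _),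
      (measurePreserving_add_right volume _).map_eq,
      Real.map_matrix_volume_pi_eq_smul_volume_pi hdet]
    exact Measure.smul_absolutelyContinuous
  have haef : ∀ᵐ ω ∂(volume : Measure (Fin d → ℝ)), ∀ s : Fin d → ℤ,
      f (b.mulVec (ω + fun i => (s i:ℝ))) = f' (b.mulVec (ω + fun i => (s i:ℝ))) :=
    ae_all_iff.2 fun s => (hqmp s).ae_eq hff'
  have haeg : ∀ᵐ ω ∂(volume : Measure (Fin d → ℝ)), ∀ s : Fin d → ℤ,
      g (b.mulVec (ω + fun i => (s i:ℝ))) = g' (b.mulVec (ω + fun i => (s i:ℝ))) :=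
    ae_all_iff.2 fun s => (hqmp s).ae_eq hgg'
  have hpgdiff : (fun ω => pgram p b f ω - pgram p b g ω)
      =ᵐ[volume.restrict (Set.Icc (0:Fin d → ℝ) 1)]
      (fun ω => pgram p b f' ω - pgram p b g' ω) := by
    refine ae_restrict_of_ae ?_
    filter_upwards [haef, haeg] with ω hωf hωg
    have h1 : pgram p b f ω = pgram p b f' ω := by
      unfold pgram
      congr 2
      exact tsum_congr fun s => by rw [hωf s]
    have h2 : pgram p b g ω = pgram p b g' ω := by
      unfold pgram
      congr 2
      exact tsum_congr fun s => by rw [hωg s]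
    rw [h1, h2]
  have hsub : (fun x => f x - g x) =ᵐ[(volume : Measure (Fin d → ℝ))]
      (fun x => f' x - g' x) := by
    filter_upwards [hff', hgg'] with x h1 h2
    rw [h1, h2]
  rw [eLpNorm_congr_ae hpgdiff, eLpNorm_congr_ae hsub]
  exact pgram_contraction_meas p hp f' g' hf'm hg'm hmemf' hmemg' b hdet
end
end
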